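/- Suppose ρ̂₁ < ρ < ρ̂₂. Then the infimum of g(t,s) over the region Ā = {(t,s) : 0 < s ≤ t} equals g_L(s*) = (2/(1+ρ))(μ₁+μ₂+2/s*), and (s*, s*) is the unique minimizer of g on Ā. -/

import Mathlib

open Matrix
set_option maxHeartbeats 1000000

/-- The covariance matrix of `(X₁(t), X₂(s))`. -/
noncomputable def covM (ρ t s : ℝ) : Matrix (Fin 2) (Fin 2) ℝ :=
  !![t, ρ * min t s; ρ * min t s, s]

/-- The quadratic form `(x,y) Σ_{ts}⁻¹ (x,y)ᵀ`. -/
noncomputable def quadF (ρ t s x y : ℝ) : ℝ :=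
  dotProduct ![x, y] ((covM ρ t s)⁻¹.mulVec ![x, y])

/-- `g(t,s) = inf{ (x,y) Σ_{ts}⁻¹ (x,y)ᵀ : x ≥ 1+μ₁t, y ≥ 1+μ₂s }`. -/
noncomputable def gFun (μ₁ μ₂ ρ t s : ℝ) : ℝ :=
  sInf { q : ℝ | ∃ x y : ℝ, 1 + μ₁ * t ≤ x ∧ 1 + μ₂ * s ≤ y ∧ q = quadF ρ t s x y }

/-- `g₃(t,s)`: the quadratic form at the corner point `(1+μ₁t, 1+μ₂s)`. -/
noncomputable def g3Fun (μ₁ μ₂ ρ t s : ℝ) : ℝ :=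
  quadF ρ t s (1 + μ₁ * t) (1 + μ₂ * s)

/-- `g_L(s)`: the value of `g₃` on the diagonal. -/
noncomputable def gLFun (μ₁ μ₂ ρ s : ℝ) : ℝ :=
  ((1 + μ₁ * s) ^ 2 + (1 + μ₂ * s) ^ 2 - 2 * ρ * (1 + μ₁ * s) * (1 + μ₂ * s))
    / ((1 - ρ ^ 2) * s)

lemma quadF_formula (ρ t s x y : ℝ) (hst : s ≤ t) (hdet : t*s - ρ^2*s^2 ≠ 0) :
    quadF ρ t s x y = (s*x^2 - 2*ρ*s*x*y + t*y^2) / (t*s - ρ^2*s^2) := by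
  unfold quadF covM
  rw [min_eq_right hst, Matrix.inv_def, eq_div_iff hdet]
  have hdet' : s*t - s^2*ρ^2 ≠ 0 := by intro h; exact hdet (by linarith)
  have hdet'' : t*s - s^2*ρ^2 ≠ 0 := by intro h; exact hdet (by linarith)
  simp [Matrix.det_fin_two_of, Matrix.adjugate_fin_two_of, Ring.inverse_eq_inv',
    Matrix.mulVec, dotProduct, Fin.sum_univ_two]
  ring_nf
  field_simp [hdet', hdet'']
  have e : (s * t - s ^ 2 * ρ ^ 2)⁻¹ * (s * t - s ^ 2 * ρ ^ 2) = 1 := inv_mul_cancel₀ hdet'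
  linear_combination (-(s * x * ρ * y * 2) + s * x ^ 2 + y ^ 2 * t) * e

lemma key (μ₁ μ₂ ρ S a b α β V C : ℝ)
    (ha : a = 1 + μ₁ * S) (hb : b = 1 + μ₂ * S)
    (hal : α = a - ρ * b) (hbe : β = b - ρ * a)
    (hV : V = (a ^ 2 + b ^ 2 - 2 * ρ * a * b) / ((1 - ρ ^ 2) * S))
    (hC : C = 4 * (α + β) * (α * μ₁) - V * α ^ 2)
    (hμ1 : 0 < μ₁) (hμ12 : μ₁ ≤ μ₂) (hρ0 : 0 < ρ) (hρu : ρ < 1) (hS : 0 < S)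
    (hαp : 0 < α) (hβp : 0 < β) (hEp : 0 < μ₁ * β + (2 * ρ * μ₁ - μ₂) * α)
    (hA : α + β = (α * μ₁ + β * μ₂) * S) :
    0 < C ∧
    (∀ t s x y : ℝ, 0 < s → s ≤ t → 1 + μ₁ * t ≤ x → 1 + μ₂ * s ≤ y →
      V + ((α * μ₁ * t + β * μ₂ * s - (α + β)) ^ 2 + C * (t - s))
          / (α ^ 2 * t + (2 * ρ * α * β + β ^ 2) * s) ≤ quadF ρ t s x y) := by
  have hμ2 : 0 < μ₂ := lt_of_lt_of_le hμ1 hμ12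
  have hρ2 : (0:ℝ) < 1 - ρ ^ 2 := by nlinarith
  have hSne : S ≠ 0 := ne_of_gt hS
  have hρ2ne : (1:ℝ) - ρ ^ 2 ≠ 0 := ne_of_gt hρ2
  -- M = 2A
  have hM2A : a ^ 2 + b ^ 2 - 2 * ρ * a * b = 2 * (α + β) := by
    linear_combination (-1) * hA + α * ha + β * hb - a * hal - b * hbe
  -- u + w = (1-ρ²) M
  have huw : α ^ 2 + 2 * ρ * α * β + β ^ 2
      = (1 - ρ ^ 2) * (a ^ 2 + b ^ 2 - 2 * ρ * a * b) := by
    rw [hal, hbe]; ring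
  -- V (1-ρ²) S = M
  have hV' : V * ((1 - ρ ^ 2) * S) = a ^ 2 + b ^ 2 - 2 * ρ * a * b := by
    rw [hV]; field_simp
  -- V (u+w) = 4 A (p+q)
  have hVuwS : V * (α ^ 2 + 2 * ρ * α * β + β ^ 2) * S
      = 4 * (α + β) * (α * μ₁ + β * μ₂) * S := by
    linear_combination (V * S) * huw + (a ^ 2 + b ^ 2 - 2 * ρ * a * b) * hV'
      + ((a ^ 2 + b ^ 2 - 2 * ρ * a * b) + 2 * (α + β)) * hM2A + (4 * (α + β)) * hA
  have hVuw : V * (α ^ 2 + 2 * ρ * α * β + β ^ 2)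
      = 4 * (α + β) * (α * μ₁ + β * μ₂) :=
    mul_right_cancel₀ hSne hVuwS
  have hCuw : C * (α ^ 2 + 2 * ρ * α * β + β ^ 2)
      = 4 * (α + β) * (α * β * (μ₁ * β + (2 * ρ * μ₁ - μ₂) * α)) := by
    linear_combination (α ^ 2 + 2 * ρ * α * β + β ^ 2) * hC + (-(α ^ 2)) * hVuw
  have huwpos : 0 < α ^ 2 + 2 * ρ * α * β + β ^ 2 := by positivity
  have hCpos : 0 < C := by
    by_contra hc
    push_neg at hc
    have h1 : C * (α ^ 2 + 2 * ρ * α * β + β ^ 2) ≤ 0 :=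
      mul_nonpos_of_nonpos_of_nonneg hc huwpos.le
    rw [hCuw] at h1
    have h2 : 0 < 4 * (α + β) * (α * β * (μ₁ * β + (2 * ρ * μ₁ - μ₂) * α)) := by
      have : 0 < α + β := by linarith
      have : 0 < α * β := mul_pos hαp hβp
      positivity
    linarith
  refine ⟨hCpos, fun t s x y hs hst hx hy => ?_⟩
  have ht : 0 < t := lt_of_lt_of_le hs hst
  have hdetpos : 0 < t * s - ρ ^ 2 * s ^ 2 := by nlinarith [mul_pos hs hs]
  have hK : 0 < α ^ 2 * t + (2 * ρ * α * β + β ^ 2) * s := by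
    have h1 : 0 < α ^ 2 * t := by positivity
    have h2 : 0 < (2 * ρ * α * β + β ^ 2) * s := by positivity
    linarith
  rw [quadF_formula ρ t s x y hst (ne_of_gt hdetpos)]
  have hId : V * (α ^ 2 * t + (2 * ρ * α * β + β ^ 2) * s)
      + ((α * μ₁ * t + β * μ₂ * s - (α + β)) ^ 2 + C * (t - s))
      = (α * (1 + μ₁ * t) + β * (1 + μ₂ * s)) ^ 2 := by
    linear_combination (t - s) * hC + s * hVuw
  have hB0 : 0 < α * (1 + μ₁ * t) + β * (1 + μ₂ * s) := by
    have h1 : 0 < 1 + μ₁ * t := by positivity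
    have h2 : 0 < 1 + μ₂ * s := by positivity
    have h3 := mul_pos hαp h1
    have h4 := mul_pos hβp h2
    linarith
  have hsq : (α * (1 + μ₁ * t) + β * (1 + μ₂ * s)) ^ 2 ≤ (α * x + β * y) ^ 2 := by
    have h1 : α * (1 + μ₁ * t) + β * (1 + μ₂ * s) ≤ α * x + β * y := by
      have := mul_le_mul_of_nonneg_left hx hαp.le
      have := mul_le_mul_of_nonneg_left hy hβp.le
      linarith
    have h2 : 0 ≤ α * (1 + μ₁ * t) + β * (1 + μ₂ * s) := hB0.le
    nlinarith [h1, h2]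
  calc V + ((α * μ₁ * t + β * μ₂ * s - (α + β)) ^ 2 + C * (t - s))
          / (α ^ 2 * t + (2 * ρ * α * β + β ^ 2) * s)
      = (α * (1 + μ₁ * t) + β * (1 + μ₂ * s)) ^ 2
          / (α ^ 2 * t + (2 * ρ * α * β + β ^ 2) * s) := by
        rw [← hId]; field_simp
    _ ≤ (α * x + β * y) ^ 2 / (α ^ 2 * t + (2 * ρ * α * β + β ^ 2) * s) := by
        gcongr
    _ ≤ (s * x ^ 2 - 2 * ρ * s * x * y + t * y ^ 2) / (t * s - ρ ^ 2 * s ^ 2) := by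
        rw [div_le_div_iff₀ hK hdetpos]
        nlinarith [sq_nonneg (x * (α * ρ * s + β * s) - y * (α * t + β * ρ * s))]

theorem stmt19 (μ₁ μ₂ ρ : ℝ) (hμ1 : 0 < μ₁) (hμ12 : μ₁ ≤ μ₂)
    (hρl : -1 < ρ) (hρu : ρ < 1)
    (hρ1 : (μ₁ + μ₂ - Real.sqrt ((μ₁ + μ₂) ^ 2 - 4 * μ₁ * (μ₂ - μ₁))) / (4 * μ₁) < ρ)
    (hρ2 : ρ < (μ₁ + μ₂) / (2 * μ₂)) :
    IsLeast { v : ℝ | ∃ t s : ℝ, 0 < s ∧ s ≤ t ∧ v = gFun μ₁ μ₂ ρ t s }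
      (gLFun μ₁ μ₂ ρ (Real.sqrt (2 * (1 - ρ) / (μ₁ ^ 2 + μ₂ ^ 2 - 2 * ρ * μ₁ * μ₂)))) ∧
    gLFun μ₁ μ₂ ρ (Real.sqrt (2 * (1 - ρ) / (μ₁ ^ 2 + μ₂ ^ 2 - 2 * ρ * μ₁ * μ₂)))
      = 2 / (1 + ρ) * (μ₁ + μ₂ +
          2 / Real.sqrt (2 * (1 - ρ) / (μ₁ ^ 2 + μ₂ ^ 2 - 2 * ρ * μ₁ * μ₂))) ∧
    gFun μ₁ μ₂ ρ (Real.sqrt (2 * (1 - ρ) / (μ₁ ^ 2 + μ₂ ^ 2 - 2 * ρ * μ₁ * μ₂)))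
        (Real.sqrt (2 * (1 - ρ) / (μ₁ ^ 2 + μ₂ ^ 2 - 2 * ρ * μ₁ * μ₂)))
      = gLFun μ₁ μ₂ ρ (Real.sqrt (2 * (1 - ρ) / (μ₁ ^ 2 + μ₂ ^ 2 - 2 * ρ * μ₁ * μ₂))) ∧
    (∀ t s : ℝ, 0 < s → s ≤ t →
      gFun μ₁ μ₂ ρ t s
        = gLFun μ₁ μ₂ ρ (Real.sqrt (2 * (1 - ρ) / (μ₁ ^ 2 + μ₂ ^ 2 - 2 * ρ * μ₁ * μ₂))) →
      t = Real.sqrt (2 * (1 - ρ) / (μ₁ ^ 2 + μ₂ ^ 2 - 2 * ρ * μ₁ * μ₂)) ∧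
      s = Real.sqrt (2 * (1 - ρ) / (μ₁ ^ 2 + μ₂ ^ 2 - 2 * ρ * μ₁ * μ₂))) := by
  have hμ2 : 0 < μ₂ := lt_of_lt_of_le hμ1 hμ12
  -- ρ > 0
  have hρ0 : 0 < ρ := by
    have harg : (μ₁ + μ₂) ^ 2 - 4 * μ₁ * (μ₂ - μ₁) ≤ (μ₁ + μ₂) ^ 2 := by nlinarith
    have h1 : Real.sqrt ((μ₁ + μ₂) ^ 2 - 4 * μ₁ * (μ₂ - μ₁)) ≤ μ₁ + μ₂ := by
      calc Real.sqrt ((μ₁ + μ₂) ^ 2 - 4 * μ₁ * (μ₂ - μ₁))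
          ≤ Real.sqrt ((μ₁ + μ₂) ^ 2) := Real.sqrt_le_sqrt harg
        _ = μ₁ + μ₂ := Real.sqrt_sq (by positivity)
    have h2 : 0 ≤ (μ₁ + μ₂ - Real.sqrt ((μ₁ + μ₂) ^ 2 - 4 * μ₁ * (μ₂ - μ₁))) / (4 * μ₁) := by
      apply div_nonneg (by linarith) (by positivity)
    linarith
  -- KI1 : quadratic in ρ negative
  have hKI1 : 4 * μ₁ * ρ ^ 2 - 2 * (μ₁ + μ₂) * ρ + (μ₂ - μ₁) < 0 := by
    set R := Real.sqrt ((μ₁ + μ₂) ^ 2 - 4 * μ₁ * (μ₂ - μ₁)) with hRdef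
    have harg : 0 ≤ (μ₁ + μ₂) ^ 2 - 4 * μ₁ * (μ₂ - μ₁) := by nlinarith
    have hR2 : R ^ 2 = (μ₁ + μ₂) ^ 2 - 4 * μ₁ * (μ₂ - μ₁) := Real.sq_sqrt harg
    have hR0 : 0 ≤ R := Real.sqrt_nonneg _
    have h1 : μ₁ + μ₂ - R < 4 * μ₁ * ρ := by
      rw [div_lt_iff₀ (by positivity : (0:ℝ) < 4 * μ₁)] at hρ1
      linarith
    have hR3 : 3 * μ₁ - μ₂ ≤ R := by nlinarith [hR2, hR0]
    have h2 : 4 * μ₁ * ρ < μ₁ + μ₂ + R := by nlinarith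
    nlinarith [mul_pos (by linarith : (0:ℝ) < 4 * μ₁ * ρ - (μ₁ + μ₂) + R)
      (by linarith : (0:ℝ) < μ₁ + μ₂ + R - 4 * μ₁ * ρ)]
  -- D > 0
  have hD : 0 < μ₁ ^ 2 + μ₂ ^ 2 - 2 * ρ * μ₁ * μ₂ := by nlinarith [mul_pos hμ1 hμ2]
  set S := Real.sqrt (2 * (1 - ρ) / (μ₁ ^ 2 + μ₂ ^ 2 - 2 * ρ * μ₁ * μ₂)) with hSdef
  have hS : 0 < S := Real.sqrt_pos.mpr (div_pos (by linarith) hD)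
  have hS2 : (μ₁ ^ 2 + μ₂ ^ 2 - 2 * ρ * μ₁ * μ₂) * S ^ 2 = 2 * (1 - ρ) := by
    rw [hSdef, Real.sq_sqrt (le_of_lt (div_pos (by linarith) hD))]
    rw [mul_comm]; exact div_mul_cancel₀ _ hD.ne'
  -- β > 0
  have hβp : 0 < (1 + μ₂ * S) - ρ * (1 + μ₁ * S) := by
    have h1 : 0 < μ₂ - ρ * μ₁ := by nlinarith
    nlinarith [mul_pos h1 hS]
  -- α > 0
  have hαp : 0 < (1 + μ₁ * S) - ρ * (1 + μ₂ * S) := by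
    rcases le_or_gt (ρ * μ₂) μ₁ with h | h
    · nlinarith [mul_nonneg (sub_nonneg.mpr h) hS.le]
    · have hm12 : μ₁ < μ₂ := by nlinarith
      have h2μ : 2 * μ₂ * ρ < μ₁ + μ₂ := by
        rw [lt_div_iff₀ (by positivity : (0:ℝ) < 2 * μ₂)] at hρ2
        linarith
      have hKI2 : 2 * (ρ * μ₂ - μ₁) ^ 2 < (1 - ρ) * (μ₁ ^ 2 + μ₂ ^ 2 - 2 * ρ * μ₁ * μ₂) := by
        nlinarith [mul_pos (mul_pos (sub_pos.mpr hm12) (by linarith : (0:ℝ) < 1 + ρ))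
          (sub_pos.mpr h2μ)]
      have hsq : ((ρ * μ₂ - μ₁) * S) ^ 2 < (1 - ρ) ^ 2 := by
        have h3 := mul_lt_mul_of_pos_right hKI2 (by positivity : (0:ℝ) < S ^ 2)
        nlinarith [hS2]
      nlinarith [hsq, mul_pos (sub_pos.mpr h) hS]
  -- E > 0
  have hEp : 0 < μ₁ * ((1 + μ₂ * S) - ρ * (1 + μ₁ * S))
      + (2 * ρ * μ₁ - μ₂) * ((1 + μ₁ * S) - ρ * (1 + μ₂ * S)) := by
    have hEform : μ₁ * ((1 + μ₂ * S) - ρ * (1 + μ₁ * S))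
        + (2 * ρ * μ₁ - μ₂) * ((1 + μ₁ * S) - ρ * (1 + μ₂ * S))
        = (1 - ρ) * (μ₁ + 2 * ρ * μ₁ - μ₂) + ρ * ((μ₁ ^ 2 + μ₂ ^ 2 - 2 * ρ * μ₁ * μ₂) * S) := by
      ring
    rcases le_or_gt μ₂ (μ₁ + 2 * ρ * μ₁) with h | h
    · rw [hEform]
      have h1 : 0 < ρ * ((μ₁ ^ 2 + μ₂ ^ 2 - 2 * ρ * μ₁ * μ₂) * S) := mul_pos hρ0 (mul_pos hD hS)
      nlinarith
    · have hm12 : μ₁ < μ₂ := by nlinarith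
      have hG : (1 - ρ) * (μ₂ - μ₁ - 2 * ρ * μ₁) ^ 2
          < 2 * ρ ^ 2 * (μ₁ ^ 2 + μ₂ ^ 2 - 2 * ρ * μ₁ * μ₂) := by
        nlinarith [mul_pos (mul_pos (neg_pos.mpr hKI1) (sub_pos.mpr hm12))
          (by linarith : (0:ℝ) < 1 + ρ)]
      have hsq : ((1 - ρ) * (μ₂ - μ₁ - 2 * ρ * μ₁)) ^ 2
          < (ρ * ((μ₁ ^ 2 + μ₂ ^ 2 - 2 * ρ * μ₁ * μ₂) * S)) ^ 2 := by
        have h3 := mul_lt_mul_of_pos_right hG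
          (mul_pos (by linarith : (0:ℝ) < 1 - ρ) (by positivity : (0:ℝ) < S ^ 2))
        nlinarith [hS2, hD, hS]
      have h4 : 0 < ρ * ((μ₁ ^ 2 + μ₂ ^ 2 - 2 * ρ * μ₁ * μ₂) * S) := mul_pos hρ0 (mul_pos hD hS)
      rw [hEform]
      nlinarith [hsq, h4]
  -- abbreviations
  set α := (1 + μ₁ * S) - ρ * (1 + μ₂ * S) with hαdef
  set β := (1 + μ₂ * S) - ρ * (1 + μ₁ * S) with hβdef
  set V := gLFun μ₁ μ₂ ρ S with hVdef
  -- the stationarity identity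
  have hA : α + β = (α * μ₁ + β * μ₂) * S := by
    rw [hαdef, hβdef]; linear_combination -hS2
  -- instantiate the key lemma
  obtain ⟨hCpos, hpb⟩ := key μ₁ μ₂ ρ S (1 + μ₁ * S) (1 + μ₂ * S) α β V
    (4 * (α + β) * (α * μ₁) - V * α ^ 2)
    rfl rfl hαdef hβdef (by rw [hVdef]; rfl) rfl
    hμ1 hμ12 hρ0 hρu hS hαp hβp hEp hA
  set C := 4 * (α + β) * (α * μ₁) - V * α ^ 2 with hCdef
  -- positivity of the denominator K
  have hK : ∀ t s : ℝ, 0 < s → s ≤ t → 0 < α ^ 2 * t + (2 * ρ * α * β + β ^ 2) * s := by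
    intro t s hs hst
    have ht : 0 < t := lt_of_lt_of_le hs hst
    have h1 : 0 < α ^ 2 * t := by positivity
    have h2 : 0 < (2 * ρ * α * β + β ^ 2) * s := by
      have : 0 < 2 * ρ * α * β + β ^ 2 := by nlinarith [mul_pos (mul_pos hρ0 hαp) hβp]
      positivity
    linarith
  -- every element of the constraint set is ≥ V
  have hVq : ∀ t s x y : ℝ, 0 < s → s ≤ t → 1 + μ₁ * t ≤ x → 1 + μ₂ * s ≤ y →
      V ≤ quadF ρ t s x y := by
    intro t s x y hs hst hx hy
    have h1 := hpb t s x y hs hst hx hy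
    have h2 : 0 ≤ ((α * μ₁ * t + β * μ₂ * s - (α + β)) ^ 2 + C * (t - s))
        / (α ^ 2 * t + (2 * ρ * α * β + β ^ 2) * s) := by
      apply div_nonneg _ (hK t s hs hst).le
      have := sq_nonneg (α * μ₁ * t + β * μ₂ * s - (α + β))
      nlinarith [mul_nonneg hCpos.le (sub_nonneg.mpr hst)]
    linarith
  have hbdd : ∀ t s : ℝ, 0 < s → s ≤ t →
      BddBelow {q : ℝ | ∃ x y : ℝ, 1 + μ₁ * t ≤ x ∧ 1 + μ₂ * s ≤ y ∧ q = quadF ρ t s x y} := by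
    intro t s hs hst
    exact ⟨V, by rintro q ⟨x, y, hx, hy, rfl⟩; exact hVq t s x y hs hst hx hy⟩
  have hne : ∀ t s : ℝ,
      {q : ℝ | ∃ x y : ℝ, 1 + μ₁ * t ≤ x ∧ 1 + μ₂ * s ≤ y ∧ q = quadF ρ t s x y}.Nonempty := by
    intro t s
    exact ⟨quadF ρ t s (1 + μ₁ * t) (1 + μ₂ * s), 1 + μ₁ * t, 1 + μ₂ * s, le_rfl, le_rfl, rfl⟩
  have hgdef : ∀ t s : ℝ, gFun μ₁ μ₂ ρ t s
      = sInf {q : ℝ | ∃ x y : ℝ, 1 + μ₁ * t ≤ x ∧ 1 + μ₂ * s ≤ y ∧ q = quadF ρ t s x y} :=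
    fun _ _ => rfl
  -- V is a lower bound for gFun on the region
  have hVle : ∀ t s : ℝ, 0 < s → s ≤ t → V ≤ gFun μ₁ μ₂ ρ t s := by
    intro t s hs hst
    rw [hgdef]
    exact le_csInf (hne t s) (by rintro q ⟨x, y, hx, hy, rfl⟩; exact hVq t s x y hs hst hx hy)
  -- refined lower bound
  have hlow : ∀ t s : ℝ, 0 < s → s ≤ t →
      V + ((α * μ₁ * t + β * μ₂ * s - (α + β)) ^ 2 + C * (t - s))
        / (α ^ 2 * t + (2 * ρ * α * β + β ^ 2) * s) ≤ gFun μ₁ μ₂ ρ t s := by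
    intro t s hs hst
    rw [hgdef]
    exact le_csInf (hne t s) (by rintro q ⟨x, y, hx, hy, rfl⟩; exact hpb t s x y hs hst hx hy)
  -- value at the corner of (S,S)
  have hdetS : (0:ℝ) < S * S - ρ ^ 2 * S ^ 2 := by
    have h := mul_pos (mul_pos hS hS) (show (0:ℝ) < 1 - ρ ^ 2 by nlinarith)
    nlinarith [h]
  have hqV : quadF ρ S S (1 + μ₁ * S) (1 + μ₂ * S) = V := by
    rw [quadF_formula ρ S S _ _ le_rfl (ne_of_gt hdetS), hVdef]
    unfold gLFun
    rw [div_eq_div_iff (ne_of_gt hdetS) (by nlinarith [mul_pos hS hS] : (1 - ρ ^ 2) * S ≠ 0)]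
    ring
  -- g(S,S) = V
  have hgSS : gFun μ₁ μ₂ ρ S S = V := by
    apply le_antisymm
    · rw [hgdef]
      exact csInf_le (hbdd S S hS le_rfl)
        ⟨1 + μ₁ * S, 1 + μ₂ * S, le_rfl, le_rfl, hqV.symm⟩
    · exact hVle S S hS le_rfl
  have hppq : 0 < α * μ₁ + β * μ₂ := by
    nlinarith [mul_pos hαp hμ1, mul_pos hβp hμ2]
  have hval : V = 2 / (1 + ρ) * (μ₁ + μ₂ + 2 / S) := by
    rw [hVdef]
    unfold gLFun
    have hnum : (1 + μ₁ * S) ^ 2 + (1 + μ₂ * S) ^ 2 - 2 * ρ * (1 + μ₁ * S) * (1 + μ₂ * S)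
        = 2 * (1 - ρ) * (2 + (μ₁ + μ₂) * S) := by linear_combination hS2
    rw [hnum]
    rw [div_eq_iff (by nlinarith [mul_pos hS hS] : (1 - ρ ^ 2) * S ≠ 0)]
    field_simp
    ring
  clear_value C
  clear_value V
  clear_value β
  clear_value α
  clear_value S
  refine ⟨⟨⟨S, S, hS, le_rfl, hgSS.symm⟩, ?_⟩, hval, hgSS, ?_⟩
  · -- lower bound over the region
    rintro v ⟨t, s, hs, hst, rfl⟩
    exact hVle t s hs hst
  · -- uniqueness
    intro t s hs hst hg
    have h1 := hlow t s hs hst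
    rw [hg] at h1
    have hNum : (α * μ₁ * t + β * μ₂ * s - (α + β)) ^ 2 + C * (t - s) ≤ 0 := by
      by_contra h
      push_neg at h
      have := div_pos h (hK t s hs hst)
      linarith
    have hts : t = s := by
      have h2 : t - s ≤ 0 := by
        by_contra hcon
        push_neg at hcon
        linarith [mul_pos hCpos hcon, sq_nonneg (α * μ₁ * t + β * μ₂ * s - (α + β)), hNum]
      linarith [le_antisymm h2 (sub_nonneg.mpr hst)]
    have h0 : α * μ₁ * t + β * μ₂ * s - (α + β) = 0 := by
      have h3 : 0 ≤ C * (t - s) := mul_nonneg hCpos.le (sub_nonneg.mpr hst)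
      have h4 : (α * μ₁ * t + β * μ₂ * s - (α + β)) ^ 2 = 0 :=
        le_antisymm (by linarith [hNum, h3]) (sq_nonneg _)
      exact sq_eq_zero_iff.mp h4
    have hsS : s = S := by
      apply mul_left_cancel₀ (ne_of_gt hppq)
      rw [hts] at h0
      linear_combination h0 + hA
    exact ⟨by rw [hts, hsS], hsS⟩
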